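/- Let n and n' be primitive vectors of ℤ² that are linearly independent over ℝ. Then the following are equivalent: (i) {n, n'} is a ℤ-basis of ℤ²; (ii) |det(n, n')| = 1; (iii) the only lattice points of ℤ² contained in the convex hull conv({0, n, n'}) are 0, n, and n', i.e. conv({0, n, n'}) ∩ ℤ² = {0, n, n'}. -/

import Mathlib

/-- The lattice ℤ² viewed inside ℝ². -/
def latticePts : Set (ℝ × ℝ) := {x | ∃ m n : ℤ, x = ((m : ℝ), (n : ℝ))}


lemma tri_hull (n n' x : ℝ × ℝ) :
    x ∈ convexHull ℝ ({(0,0), n, n'} : Set (ℝ × ℝ)) ↔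
    ∃ s t : ℝ, 0 ≤ s ∧ 0 ≤ t ∧ s + t ≤ 1 ∧ x = s • n + t • n' := by
  constructor
  · intro hx
    have hsub : convexHull ℝ ({(0,0), n, n'} : Set (ℝ × ℝ)) ⊆
        {x | ∃ s t : ℝ, 0 ≤ s ∧ 0 ≤ t ∧ s + t ≤ 1 ∧ x = s • n + t • n'} := by
      apply convexHull_min
      · rintro p (rfl | rfl | rfl)
        · exact ⟨0, 0, le_refl _, le_refl _, by norm_num, by simp⟩
        · exact ⟨1, 0, zero_le_one, le_refl _, by norm_num, by simp⟩
        · exact ⟨0, 1, le_refl _, zero_le_one, by norm_num, by simp⟩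
      · rintro p ⟨s1, t1, hs1, ht1, hst1, rfl⟩ q ⟨s2, t2, hs2, ht2, hst2, rfl⟩ u v hu hv huv
        refine ⟨u*s1 + v*s2, u*t1 + v*t2, by positivity, by positivity, by nlinarith, ?_⟩
        module
    exact hsub hx
  · rintro ⟨s, t, hs, ht, hst, rfl⟩
    have h := (convex_convexHull ℝ ({(0,0), n, n'} : Set (ℝ × ℝ))).sum_mem
      (t := (Finset.univ : Finset (Fin 3))) (w := ![1 - s - t, s, t]) (z := ![(0,0), n, n'])
      (by intro i _; fin_cases i <;> simp <;> linarith)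
      (by simp [Fin.sum_univ_three]; ring)
      (by intro i _; fin_cases i <;> (apply subset_convexHull; simp))
    have e : ∑ i : Fin 3, (![1 - s - t, s, t] : Fin 3 → ℝ) i • (![(0,0), n, n'] : Fin 3 → ℝ × ℝ) i = s • n + t • n' := by
      simp [Fin.sum_univ_three]
    rwa [e] at h

lemma det_ne_zero (a b c d : ℤ)
    (hn' : Int.gcd c d = 1)
    (hli : LinearIndependent ℝ ![(((a : ℝ), (b : ℝ)) : ℝ × ℝ), ((c : ℝ), (d : ℝ))]) :
    a * d - b * c ≠ 0 := by
  intro h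
  rw [LinearIndependent.pair_iff] at hli
  have h0 : (a:ℝ) * d - b * c = 0 := by exact_mod_cast h
  by_cases hd : d = 0
  · have hc : c ≠ 0 := by
      intro hc; rw [hc, hd] at hn'; simp [Int.gcd] at hn'
    have := hli (c : ℝ) (-(a : ℝ)) (by
      simp [Prod.ext_iff]
      constructor <;> nlinarith)
    exact hc (by exact_mod_cast this.1)
  · have := hli (d : ℝ) (-(b : ℝ)) (by
      simp [Prod.ext_iff]
      constructor <;> nlinarith)
    exact hd (by exact_mod_cast this.1)

lemma cramer_real (a b c d : ℤ)
    (s t x y : ℝ) (h1 : s * a + t * c = x) (h2 : s * b + t * d = y) :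
    s * ((a:ℝ) * d - b * c) = x * d - y * c ∧
    t * ((a:ℝ) * d - b * c) = (a:ℝ) * y - b * x := by
  constructor
  · linear_combination h1 * d - h2 * c
  · linear_combination h2 * a - h1 * b

/-- for primitive, ℝ-linearly independent n = (a,b), n' = (c,d) ∈ ℤ², TFAE:
(i) {n,n'} is a ℤ-basis of ℤ²; (ii) |det(n,n')| = 1;
(iii) conv({0,n,n'}) ∩ ℤ² = {0,n,n'}. -/
theorem stmt2 (a b c d : ℤ)
    (hn : Int.gcd a b = 1) (hn' : Int.gcd c d = 1)
    (hli : LinearIndependent ℝ ![(((a : ℝ), (b : ℝ)) : ℝ × ℝ), ((c : ℝ), (d : ℝ))]) :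
    ((∀ x y : ℤ, ∃! st : ℤ × ℤ, x = st.1 * a + st.2 * c ∧ y = st.1 * b + st.2 * d)
        ↔ |a * d - b * c| = 1) ∧
    (|a * d - b * c| = 1 ↔
      convexHull ℝ ({(0, 0), ((a : ℝ), (b : ℝ)), ((c : ℝ), (d : ℝ))} : Set (ℝ × ℝ))
          ∩ latticePts
        = ({(0, 0), ((a : ℝ), (b : ℝ)), ((c : ℝ), (d : ℝ))} : Set (ℝ × ℝ))) := by
  have hD : a * d - b * c ≠ 0 := det_ne_zero a b c d hn' hli
  have hDr : ((a:ℝ) * d - (b:ℝ) * (c:ℝ)) ≠ 0 := by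
    intro h0; exact hD (by exact_mod_cast h0)
  -- uniqueness of real coordinates
  have uniq : ∀ s t s' t' : ℝ, s * a + t * c = s' * a + t' * c →
      s * b + t * d = s' * b + t' * d → s = s' ∧ t = t' := by
    intro s t s' t' h1 h2
    have h1' : (s - s') * a + (t - t') * c = 0 := by linear_combination h1
    have h2' : (s - s') * b + (t - t') * d = 0 := by linear_combination h2
    obtain ⟨e1, e2⟩ := cramer_real a b c d (s - s') (t - t') 0 0 h1' h2'
    constructor
    · have := mul_eq_zero.mp (by linarith [e1] : (s - s') * ((a:ℝ) * d - b * c) = 0)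
      rcases this with h | h
      · linarith [sub_eq_zero.mp h]
      · exact absurd h hDr
    · have := mul_eq_zero.mp (by linarith [e2] : (t - t') * ((a:ℝ) * d - b * c) = 0)
      rcases this with h | h
      · linarith [sub_eq_zero.mp h]
      · exact absurd h hDr
  -- (both (1,0) and (0,1) representable) → |det| = 1
  have repr_det : ∀ s t u v : ℤ, (1:ℤ) = s * a + t * c → (0:ℤ) = s * b + t * d →
      (0:ℤ) = u * a + v * c → (1:ℤ) = u * b + v * d → |a * d - b * c| = 1 := by
    intro s t u v hs1 hs2 hu1 hu2
    have key : (s * v - t * u) * (a * d - b * c) = 1 := by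
      linear_combination (-(u*b + v*d)) * hs1 + (u*a + v*c) * hs2 - hu2
    have h3 : |a * d - b * c| * |s * v - t * u| = 1 := by
      rw [← abs_mul]
      rw [mul_comm] at key
      rw [key]; exact abs_one
    exact Int.eq_one_of_mul_eq_one_right (abs_nonneg _) h3
  have part1 : (∀ x y : ℤ, ∃! st : ℤ × ℤ, x = st.1 * a + st.2 * c ∧ y = st.1 * b + st.2 * d)
      ↔ |a * d - b * c| = 1 := by
    constructor
    · intro h
      obtain ⟨⟨s, t⟩, ⟨hs1, hs2⟩, -⟩ := h 1 0
      obtain ⟨⟨u, v⟩, ⟨hu1, hu2⟩, -⟩ := h 0 1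
      exact repr_det s t u v hs1 hs2 hu1 hu2
    · intro h x y
      have h2 : (a * d - b * c) * (a * d - b * c) = 1 := by
        rw [← abs_mul_abs_self, h]; norm_num
      refine ⟨((x * d - y * c) * (a * d - b * c), ((a * y - b * x) * (a * d - b * c))), ⟨?_, ?_⟩, ?_⟩
      · simp only
        linear_combination (-x) * h2
      · simp only
        linear_combination (-y) * h2
      · rintro ⟨s', t'⟩ ⟨e1, e2⟩
        simp only [Prod.mk.injEq]
        constructor
        · have e3 : s' * (a * d - b * c) = (x * d - y * c) * (a * d - b * c) * (a * d - b * c) := by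
            linear_combination (-(d:ℤ)) * e1 + c * e2 + (-(x * d - y * c)) * h2
          exact mul_right_cancel₀ hD e3
        · have e3 : t' * (a * d - b * c) = (a * y - b * x) * (a * d - b * c) * (a * d - b * c) := by
            linear_combination b * e1 - a * e2 + (-(a * y - b * x)) * h2
          exact mul_right_cancel₀ hD e3
  refine ⟨part1, ?_⟩
  constructor
  · -- |det| = 1 → triangle has no extra lattice points
    intro h
    have hDD : ((a:ℝ) * d - b * c) * ((a:ℝ) * d - b * c) = 1 := by
      have h2 : (a * d - b * c) * (a * d - b * c) = 1 := by
        rw [← abs_mul_abs_self, h]; norm_num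
      exact_mod_cast h2
    apply Set.Subset.antisymm
    · rintro p ⟨hhull, m, k, rfl⟩
      obtain ⟨s, t, hs, ht, hst, heq⟩ := (tri_hull _ _ _).mp hhull
      rw [Prod.smul_mk, Prod.smul_mk, Prod.mk_add_mk, Prod.mk.injEq] at heq
      obtain ⟨hc1, hc2⟩ := heq
      simp only [smul_eq_mul] at hc1 hc2
      obtain ⟨e1, e2⟩ := cramer_real a b c d s t (m:ℝ) (k:ℝ) hc1.symm hc2.symm
      set p' : ℤ := (m * d - k * c) * (a * d - b * c) with hp'
      set q' : ℤ := (a * k - b * m) * (a * d - b * c) with hq'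
      have hsp : s = (p' : ℝ) := by
        push_cast [hp']
        linear_combination ((a:ℝ) * d - b * c) * e1 - s * hDD
      have htq : t = (q' : ℝ) := by
        push_cast [hq']
        linear_combination ((a:ℝ) * d - b * c) * e2 - t * hDD
      have hp0 : 0 ≤ p' := by exact_mod_cast hsp ▸ hs
      have hq0 : 0 ≤ q' := by exact_mod_cast htq ▸ ht
      have hpq : p' + q' ≤ 1 := by
        have : (p' : ℝ) + (q' : ℝ) ≤ 1 := by rw [← hsp, ← htq]; exact hst
        exact_mod_cast this
      have hcases : (p' = 0 ∧ q' = 0) ∨ (p' = 1 ∧ q' = 0) ∨ (p' = 0 ∧ q' = 1) := by omega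
      have hs' : s = (p' : ℝ) := hsp
      rcases hcases with ⟨h1, h2⟩ | ⟨h1, h2⟩ | ⟨h1, h2⟩ <;>
        rw [h1] at hsp <;> rw [h2] at htq <;>
        simp only [Int.cast_zero, Int.cast_one] at hsp htq <;>
        subst hsp <;> subst htq <;>
        simp only [Set.mem_insert_iff, Set.mem_singleton_iff, Prod.mk.injEq]
      · exact Or.inl ⟨by rw [hc1]; ring, by rw [hc2]; ring⟩
      · exact Or.inr (Or.inl ⟨by rw [hc1]; ring, by rw [hc2]; ring⟩)
      · exact Or.inr (Or.inr ⟨by rw [hc1]; ring, by rw [hc2]; ring⟩)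
    · rintro p (rfl | rfl | rfl)
      · exact ⟨subset_convexHull ℝ _ (by simp), 0, 0, by norm_num⟩
      · exact ⟨subset_convexHull ℝ _ (by simp), a, b, rfl⟩
      · exact ⟨subset_convexHull ℝ _ (by simp), c, d, rfl⟩
  · -- no extra lattice points → |det| = 1
    intro h
    by_contra habs
    have key : ∃ x0 y0 : ℤ, ¬∃ st : ℤ × ℤ, x0 = st.1 * a + st.2 * c ∧ y0 = st.1 * b + st.2 * d := by
      by_contra hK
      push_neg at hK
      obtain ⟨⟨s, t⟩, hs1, hs2⟩ := hK 1 0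
      obtain ⟨⟨u, v⟩, hu1, hu2⟩ := hK 0 1
      exact habs (repr_det s t u v hs1 hs2 hu1 hu2)
    obtain ⟨x0, y0, hnr⟩ := key
    set s0 : ℝ := ((x0:ℝ) * d - y0 * c) / ((a:ℝ) * d - b * c) with hs0def
    set t0 : ℝ := ((a:ℝ) * y0 - b * x0) / ((a:ℝ) * d - b * c) with ht0def
    have hsol1 : s0 * a + t0 * c = (x0 : ℝ) := by
      rw [hs0def, ht0def, div_mul_eq_mul_div, div_mul_eq_mul_div, ← add_div, div_eq_iff hDr]; ring
    have hsol2 : s0 * b + t0 * d = (y0 : ℝ) := by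
      rw [hs0def, ht0def, div_mul_eq_mul_div, div_mul_eq_mul_div, ← add_div, div_eq_iff hDr]; ring
    set m : ℤ := ⌊s0⌋ with hm
    set k : ℤ := ⌊t0⌋ with hk
    set s1 : ℝ := s0 - m with hs1def
    set t1 : ℝ := t0 - k with ht1def
    have hs1n : 0 ≤ s1 := by
      have := Int.floor_le s0; rw [hs1def]; linarith
    have ht1n : 0 ≤ t1 := by
      have := Int.floor_le t0; rw [ht1def]; linarith
    have hs1l : s1 < 1 := by
      have := Int.lt_floor_add_one s0; rw [hs1def]; linarith
    have ht1l : t1 < 1 := by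
      have := Int.lt_floor_add_one t0; rw [ht1def]; linarith
    set p1 : ℤ := x0 - m * a - k * c with hp1def
    set p2 : ℤ := y0 - m * b - k * d with hp2def
    have hp1 : (p1 : ℝ) = s1 * a + t1 * c := by
      rw [hp1def, hs1def, ht1def]; push_cast; linear_combination -hsol1
    have hp2 : (p2 : ℝ) = s1 * b + t1 * d := by
      rw [hp2def, hs1def, ht1def]; push_cast; linear_combination -hsol2
    have hnz : ¬(s1 = 0 ∧ t1 = 0) := by
      rintro ⟨h1, h2⟩
      apply hnr
      refine ⟨(m, k), ?_, ?_⟩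
      · have : (x0 : ℝ) = (m:ℝ) * a + k * c := by
          rw [← hsol1]
          have hs0m : s0 = (m:ℝ) := by rw [hs1def] at h1; linarith
          have ht0k : t0 = (k:ℝ) := by rw [ht1def] at h2; linarith
          rw [hs0m, ht0k]
        exact_mod_cast this
      · have : (y0 : ℝ) = (m:ℝ) * b + k * d := by
          rw [← hsol2]
          have hs0m : s0 = (m:ℝ) := by rw [hs1def] at h1; linarith
          have ht0k : t0 = (k:ℝ) := by rw [ht1def] at h2; linarith
          rw [hs0m, ht0k]
        exact_mod_cast this
    by_cases hcase : s1 + t1 ≤ 1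
    · have hPhull : (((p1:ℝ), (p2:ℝ)) : ℝ × ℝ) ∈
          convexHull ℝ ({(0, 0), ((a : ℝ), (b : ℝ)), ((c : ℝ), (d : ℝ))} : Set (ℝ × ℝ)) := by
        refine (tri_hull _ _ _).mpr ⟨s1, t1, hs1n, ht1n, hcase, ?_⟩
        rw [Prod.smul_mk, Prod.smul_mk, Prod.mk_add_mk, Prod.mk.injEq]
        simp only [smul_eq_mul]
        exact ⟨hp1, hp2⟩
      have hPmem : (((p1:ℝ), (p2:ℝ)) : ℝ × ℝ) ∈
          ({(0, 0), ((a : ℝ), (b : ℝ)), ((c : ℝ), (d : ℝ))} : Set (ℝ × ℝ)) := by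
        rw [← h]; exact ⟨hPhull, p1, p2, rfl⟩
      simp only [Set.mem_insert_iff, Set.mem_singleton_iff, Prod.mk.injEq] at hPmem
      rcases hPmem with ⟨e1, e2⟩ | ⟨e1, e2⟩ | ⟨e1, e2⟩
      · have := uniq s1 t1 0 0 (by rw [← hp1, e1]; ring) (by rw [← hp2, e2]; ring)
        exact hnz this
      · have := uniq s1 t1 1 0 (by rw [← hp1, e1]; ring) (by rw [← hp2, e2]; ring)
        linarith [this.1]
      · have := uniq s1 t1 0 1 (by rw [← hp1, e1]; ring) (by rw [← hp2, e2]; ring)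
        linarith [this.2]
    · push_neg at hcase
      have hs1pos : 0 < s1 := by linarith
      have ht1pos : 0 < t1 := by linarith
      set q1 : ℤ := a + c - p1 with hq1def
      set q2 : ℤ := b + d - p2 with hq2def
      have hq1 : (q1 : ℝ) = (1 - s1) * a + (1 - t1) * c := by
        rw [hq1def]; push_cast; linear_combination -hp1
      have hq2 : (q2 : ℝ) = (1 - s1) * b + (1 - t1) * d := by
        rw [hq2def]; push_cast; linear_combination -hp2
      have hQhull : (((q1:ℝ), (q2:ℝ)) : ℝ × ℝ) ∈
          convexHull ℝ ({(0, 0), ((a : ℝ), (b : ℝ)), ((c : ℝ), (d : ℝ))} : Set (ℝ × ℝ)) := by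
        refine (tri_hull _ _ _).mpr ⟨1 - s1, 1 - t1, by linarith, by linarith, by linarith, ?_⟩
        rw [Prod.smul_mk, Prod.smul_mk, Prod.mk_add_mk, Prod.mk.injEq]
        simp only [smul_eq_mul]
        exact ⟨hq1, hq2⟩
      have hQmem : (((q1:ℝ), (q2:ℝ)) : ℝ × ℝ) ∈
          ({(0, 0), ((a : ℝ), (b : ℝ)), ((c : ℝ), (d : ℝ))} : Set (ℝ × ℝ)) := by
        rw [← h]; exact ⟨hQhull, q1, q2, rfl⟩
      simp only [Set.mem_insert_iff, Set.mem_singleton_iff, Prod.mk.injEq] at hQmem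
      rcases hQmem with ⟨e1, e2⟩ | ⟨e1, e2⟩ | ⟨e1, e2⟩
      · have := uniq (1 - s1) (1 - t1) 0 0 (by rw [← hq1, e1]; ring) (by rw [← hq2, e2]; ring)
        linarith [this.1]
      · have := uniq (1 - s1) (1 - t1) 1 0 (by rw [← hq1, e1]; ring) (by rw [← hq2, e2]; ring)
        linarith [this.2]
      · have := uniq (1 - s1) (1 - t1) 0 1 (by rw [← hq1, e1]; ring) (by rw [← hq2, e2]; ring)
        linarith [this.1]
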